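/- For any graph G, any prime p, and any k ≥ 0, the value f_G^+(p^k) = Σ_{N_1⋯N_v = p^k} |μ(n_1)⋯μ(n_e)| (sum over all edge numberings of G) equals the coefficient of x^k in the polynomial Q_G^+(x) = Σ_{F ⊆ E} x^{v(F)}. -/

import Mathlib

open scoped BigOperators Classical

noncomputable section

/-- The vertex numbering `N_r` associated to an edge numbering `n` of the graph with
vertex set `Fin v` and edge set `E`: the lcm of `n a` over the edges `a` incident to `r`
(equal to `1` if `r` is isolated). -/
def vertexNum (v : ℕ) (E : Finset (Sym2 (Fin v))) (n : {a : Sym2 (Fin v) // a ∈ E} → ℕ+)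
    (r : Fin v) : ℕ :=
  (E.attach.filter fun a => r ∈ a.1).lcm fun a => (n a : ℕ)

/-- `v(F)`: the number of vertices incident to at least one edge of `F`. -/
def vCount (v : ℕ) (F : Finset (Sym2 (Fin v))) : ℕ :=
  (Finset.univ.filter fun r : Fin v => ∃ a ∈ F, r ∈ a).card

/-- `f_G^+(m) = Σ_{N_1 ⋯ N_v = m} |μ(n_1) ⋯ μ(n_e)|`, the sum extending over all edge
numberings of the graph whose associated vertex numbering has product `m`. -/
def fGplus (v : ℕ) (E : Finset (Sym2 (Fin v))) (m : ℕ) : ℤ :=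
  ∑ᶠ n : {a : Sym2 (Fin v) // a ∈ E} → ℕ+,
    if ∏ r, vertexNum v E n r = m then |∏ a, ArithmeticFunction.moebius (n a : ℕ)| else 0

/-- The polynomial `Q_G^+(x) = Σ_{F ⊆ E} x^{v(F)}`. -/
def QGplusPoly (v : ℕ) (E : Finset (Sym2 (Fin v))) : Polynomial ℤ :=
  ∑ F ∈ E.powerset, Polynomial.X ^ vCount v F

section Aux

variable {v : ℕ} (E : Finset (Sym2 (Fin v))) {p : ℕ} (hp : p.Prime)

/-- The edge numbering associated to a subset `F` of edges: `p` on `F`, `1` elsewhere. -/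
@[simp] lemma toPNat_val_aux (n : ℕ) (h : 0 < n) : ((Nat.toPNat n h : ℕ+) : ℕ) = n := rfl

def edgeFun (F : Finset (Sym2 (Fin v))) : {a : Sym2 (Fin v) // a ∈ E} → ℕ+ :=
  fun a => if a.1 ∈ F then Nat.toPNat p hp.pos else 1

lemma vertexNum_edgeFun {F : Finset (Sym2 (Fin v))} (hF : F ⊆ E) (r : Fin v) :
    vertexNum v E (edgeFun E hp F) r = if (∃ a ∈ F, r ∈ a) then p else 1 := by
  unfold vertexNum
  split_ifs with h
  · obtain ⟨a, haF, har⟩ := h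
    have haE : a ∈ E := hF haF
    have hmem : (⟨a, haE⟩ : {a : Sym2 (Fin v) // a ∈ E}) ∈
        E.attach.filter fun a => r ∈ a.1 := by
      simp [Finset.mem_filter, har]
    apply Nat.dvd_antisymm
    · apply Finset.lcm_dvd
      intro b _
      simp only [edgeFun]
      split_ifs <;> simp
    · have := Finset.dvd_lcm (f := fun a : {a : Sym2 (Fin v) // a ∈ E} => ((edgeFun E hp F a : ℕ+) : ℕ)) hmem
      simpa [edgeFun, haF] using this
  · apply Nat.eq_one_of_dvd_one
    apply Finset.lcm_dvd
    intro b hb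
    have hbr : r ∈ b.1 := (Finset.mem_filter.mp hb).2
    have hbF : b.1 ∉ F := fun hbF => h ⟨b.1, hbF, hbr⟩
    simp [edgeFun, hbF]

lemma prod_vertexNum_edgeFun {F : Finset (Sym2 (Fin v))} (hF : F ⊆ E) :
    ∏ r, vertexNum v E (edgeFun E hp F) r = p ^ vCount v F := by
  rw [Finset.prod_congr rfl fun r _ => vertexNum_edgeFun E hp hF r]
  rw [Finset.prod_ite, Finset.prod_const, Finset.prod_const_one, mul_one]
  rfl

lemma abs_prod_moebius_edgeFun (F : Finset (Sym2 (Fin v))) :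
    |∏ a, ArithmeticFunction.moebius ((edgeFun E hp F a : ℕ+) : ℕ)| = 1 := by
  rw [Finset.abs_prod]
  apply Finset.prod_eq_one
  intro a _
  simp only [edgeFun]
  split_ifs
  · simp [ArithmeticFunction.moebius_apply_prime hp]
  · simp

include hp in
lemma edgeFun_injOn :
    Set.InjOn (edgeFun E hp) (E.powerset : Set (Finset (Sym2 (Fin v)))) := by
  intro F hF F' hF' h
  have hF : F ⊆ E := Finset.mem_powerset.mp hF
  have hF' : F' ⊆ E := Finset.mem_powerset.mp hF'
  have hp1 : Nat.toPNat p hp.pos ≠ 1 := by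
    intro h1
    have := congrArg (fun x : ℕ+ => (x : ℕ)) h1
    simp at this
    exact hp.one_lt.ne' this
  ext a
  constructor
  · intro ha
    have haE : a ∈ E := hF ha
    have := congrFun h ⟨a, haE⟩
    simp only [edgeFun, ha, if_true] at this
    by_contra ha'
    rw [if_neg ha'] at this
    exact hp1 this
  · intro ha
    have haE : a ∈ E := hF' ha
    have := congrFun h ⟨a, haE⟩
    simp only [edgeFun, ha, if_true] at this
    by_contra ha'
    rw [if_neg ha'] at this
    exact hp1 this.symm

end Aux

/-- For any prime `p` and `k ≥ 0`, `f_G^+(p^k)` equals the coefficient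
of `x^k` in `Q_G^+(x)`. -/
theorem stmt3 (v : ℕ) (E : Finset (Sym2 (Fin v))) (hE : ∀ a ∈ E, ¬ a.IsDiag)
    (p : ℕ) (hp : p.Prime) (k : ℕ) :
    fGplus v E (p ^ k) = (QGplusPoly v E).coeff k := by
  classical
  set f : ({a : Sym2 (Fin v) // a ∈ E} → ℕ+) → ℤ := fun n =>
    if ∏ r, vertexNum v E n r = p ^ k then
      |∏ a, ArithmeticFunction.moebius (n a : ℕ)| else 0 with hf
  have hsupp : Function.support f ⊆
      ((E.powerset.image (edgeFun E hp)) : Finset _) := by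
    intro n hn
    simp only [Function.mem_support, hf] at hn
    split_ifs at hn with hcond
    · -- every n a divides p ^ k and is squarefree
      have habs : (∏ a, ArithmeticFunction.moebius (n a : ℕ)) ≠ 0 := by
        intro h0; rw [h0] at hn; simp at hn
      have hsq : ∀ a, Squarefree ((n a : ℕ+) : ℕ) := by
        intro a
        have := Finset.prod_ne_zero_iff.mp habs a (Finset.mem_univ a)
        exact ArithmeticFunction.moebius_ne_zero_iff_squarefree.mp this
      have hval : ∀ a : {a : Sym2 (Fin v) // a ∈ E},
          ((n a : ℕ+) : ℕ) = 1 ∨ ((n a : ℕ+) : ℕ) = p := by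
        intro a
        -- n a divides the vertex number at some vertex of a
        obtain ⟨r, hr⟩ : ∃ r, r ∈ a.1 := ⟨a.1.out.1, Sym2.out_fst_mem a.1⟩
        have hmem : a ∈ E.attach.filter fun b => r ∈ b.1 := by
          simp [Finset.mem_filter, hr]
        have h1 : ((n a : ℕ+) : ℕ) ∣ vertexNum v E n r :=
          Finset.dvd_lcm hmem
        have h2 : vertexNum v E n r ∣ p ^ k := by
          rw [← hcond]
          exact Finset.dvd_prod_of_mem _ (Finset.mem_univ r)
        obtain ⟨i, hik, hi⟩ := (Nat.dvd_prime_pow hp).mp (h1.trans h2)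
        match i, hi with
        | 0, hi => left; simpa using hi
        | 1, hi => right; simpa using hi
        | (i+2), hi =>
          exfalso
          have hsqa := hsq a
          rw [hi] at hsqa
          have hdvd : p * p ∣ p ^ (i + 2) := by
            rw [← sq]
            exact pow_dvd_pow p (by omega)
          exact hp.one_lt.ne' (Nat.isUnit_iff.mp (hsqa p hdvd))
      -- extract the subset F
      refine Finset.mem_coe.mpr (Finset.mem_image.mpr
        ⟨E.filter fun b => ∃ h : b ∈ E, ((n ⟨b, h⟩ : ℕ+) : ℕ) = p,
          Finset.mem_powerset.mpr (Finset.filter_subset _ _), ?_⟩)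
      funext a
      simp only [edgeFun]
      by_cases hcase : ((n a : ℕ+) : ℕ) = p
      · rw [if_pos]
        · exact (PNat.coe_injective (by simpa using hcase.symm))
        · exact Finset.mem_filter.mpr ⟨a.2, a.2, by simpa using hcase⟩
      · have h1 : ((n a : ℕ+) : ℕ) = 1 := (hval a).resolve_right hcase
        rw [if_neg]
        · exact (PNat.coe_injective (by simpa using h1.symm))
        · intro hmem
          obtain ⟨-, h, hpa⟩ := Finset.mem_filter.mp hmem
          have : (⟨a.1, h⟩ : {a : Sym2 (Fin v) // a ∈ E}) = a := Subtype.ext rfl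
          rw [this] at hpa
          exact hcase hpa
    · exact absurd rfl hn
  have key : fGplus v E (p ^ k) =
      ∑ F ∈ E.powerset, (if vCount v F = k then (1 : ℤ) else 0) := by
    rw [fGplus, ← hf]
    rw [finsum_eq_sum_of_support_subset f hsupp]
    rw [Finset.sum_image (fun F hF F' hF' h => edgeFun_injOn E hp hF hF' h)]
    refine Finset.sum_congr rfl fun F hF => ?_
    have hFE : F ⊆ E := Finset.mem_powerset.mp hF
    rw [hf]
    simp only [prod_vertexNum_edgeFun E hp hFE, abs_prod_moebius_edgeFun E hp F]
    congr 1
    simp only [eq_iff_iff]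
    exact ⟨fun h => Nat.pow_right_injective hp.two_le h,
      fun h => by rw [h]⟩
  rw [key, QGplusPoly, Polynomial.finset_sum_coeff]
  refine Finset.sum_congr rfl fun F _ => ?_
  rw [Polynomial.coeff_X_pow]
  simp [eq_comm]

end
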